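/- Fix reals λ > 0, β > 0, α > 0, λ₁ > 0. Define p₀(t) = exp(-λ t (1 - β^α/(λ₁+β)^α)) and, for integers k ≥ 1, p_k(t) = (e^{-λ t}/k!) (λ₁/(λ₁+β))^k Σ_{n=1}^∞ (λ t β^α)^n Γ(α n + k) / ((λ₁+β)^{α n} n! Γ(α n)). Then for every integer k ≥ 0 and every t > 0, the derivative satisfies d/dt p_k(t) = (λ β^α/(λ₁+β)^α - λ) p_k(t) + (λ β^α/(λ₁+β)^α) Σ_{m=1}^{k} (λ₁/(λ₁+β))^m (Γ(m+α)/(m! Γ(α))) p_{k-m}(t), where the sum is empty for k = 0. -/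

import Mathlib

open Real MeasureTheory Filter Finset

/-- Wright function `Φ(ρ, δ, z) = Σ_{j≥0} z^j / (j! Γ(ρ j + δ))`. -/
noncomputable def wright (ρ δ z : ℝ) : ℝ :=
  ∑' j : ℕ, z ^ j / ((Nat.factorial j : ℝ) * Real.Gamma (ρ * (j : ℝ) + δ))

/-- Wright function with second parameter 0:
`Φ(ρ, 0, z) = Σ_{j≥1} z^j / (j! Γ(ρ j))`. -/
noncomputable def wright0 (ρ z : ℝ) : ℝ :=
  ∑' j : ℕ, z ^ (j + 1) /
    ((Nat.factorial (j + 1) : ℝ) * Real.Gamma (ρ * ((j : ℝ) + 1)))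

/-- Two-parameter Mittag-Leffler function `E_{ρ,δ}(z) = Σ_{j≥0} z^j / Γ(ρ j + δ)`. -/
noncomputable def ml2 (ρ δ z : ℝ) : ℝ :=
  ∑' j : ℕ, z ^ j / Real.Gamma (ρ * (j : ℝ) + δ)

/-- Three-parameter generalized Mittag-Leffler function
`E^γ_{ρ,δ}(z) = Σ_{j≥0} (Γ(γ+j)/Γ(γ)) z^j / (j! Γ(ρ j + δ))`. -/
noncomputable def ml3 (γ ρ δ z : ℝ) : ℝ :=
  ∑' j : ℕ, (Real.Gamma (γ + (j : ℝ)) / Real.Gamma γ) * z ^ j /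
    ((Nat.factorial j : ℝ) * Real.Gamma (ρ * (j : ℝ) + δ))

/-- Modified Bessel function of the first kind of order 0:
`I₀(z) = Σ_{j≥0} (z/2)^{2j} / (j!)²`. -/
noncomputable def besselI0 (z : ℝ) : ℝ :=
  ∑' j : ℕ, (z / 2) ^ (2 * j) / ((Nat.factorial j : ℝ) * (Nat.factorial j : ℝ))

section Helpers



noncomputable def Acoef (α r : ℝ) (k n : ℕ) : ℝ :=
  r ^ n * Real.Gamma (α * n + k) / ((n.factorial : ℝ) * Real.Gamma (α * n))

lemma Acoef_zero (α r : ℝ) (k : ℕ) : Acoef α r k 0 = 0 := by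
  simp [Acoef, Real.Gamma_zero]

lemma myGamma_nat_add (x : ℝ) (hx : 0 < x) (k : ℕ) :
    Real.Gamma (x + k) = (∏ i ∈ Finset.range k, (x + i)) * Real.Gamma x := by
  induction k with
  | zero => simp
  | succ k ih =>
    have h1 : x + ((k : ℕ) + 1 : ℕ) = (x + k) + 1 := by push_cast; ring
    rw [h1, Real.Gamma_add_one (by positivity), ih, Finset.prod_range_succ]; ring

lemma Acoef_le (α r : ℝ) (hα : 0 < α) (hr : 0 < r) (k n : ℕ) :
    |Acoef α r k n| ≤ (α + k) ^ k * ((2 ^ k * r) ^ n / (n.factorial : ℝ)) := by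
  rcases n with _ | m
  · rw [Acoef_zero]; simp; positivity
  · set N : ℕ := m + 1 with hN
    have hb : (0:ℝ) < α * N := by positivity
    have hΓb : Real.Gamma (α * N) ≠ 0 := (Real.Gamma_pos_of_pos hb).ne'
    have hA : Acoef α r k N = r ^ N * (∏ i ∈ Finset.range k, (α * N + i)) / (N.factorial : ℝ) := by
      rw [Acoef, myGamma_nat_add _ hb k]
      field_simp
    rw [hA]
    have hprod_nonneg : (0:ℝ) ≤ ∏ i ∈ Finset.range k, (α * N + i) :=
      Finset.prod_nonneg fun i _ => by positivity
    rw [abs_of_nonneg (by positivity)]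
    have hstep : (∏ i ∈ Finset.range k, (α * N + i)) ≤ (α + k) ^ k * (2 ^ k) ^ N := by
      calc (∏ i ∈ Finset.range k, (α * N + i))
          ≤ ∏ i ∈ Finset.range k, ((α + k) * (N + 1)) := by
            apply Finset.prod_le_prod (fun i _ => by positivity)
            intro i hi
            have hik : (i:ℝ) ≤ k := by
              have := Finset.mem_range.mp hi; exact_mod_cast this.le
            have hN0 : (0:ℝ) ≤ (N:ℝ) := Nat.cast_nonneg N
            nlinarith [hα.le]
        _ = (α + k) ^ k * ((N:ℝ) + 1) ^ k := by
            rw [Finset.prod_const]; rw [Finset.card_range]; rw [mul_pow]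
        _ ≤ (α + k) ^ k * ((2:ℝ) ^ N) ^ k := by
            apply mul_le_mul_of_nonneg_left _ (by positivity)
            apply pow_le_pow_left₀ (by positivity)
            have : N < 2 ^ N := Nat.lt_two_pow_self
            exact_mod_cast this
        _ = (α + k) ^ k * ((2:ℝ) ^ k) ^ N := by rw [← pow_mul, ← pow_mul, Nat.mul_comm]
    calc r ^ N * (∏ i ∈ Finset.range k, (α * N + i)) / (N.factorial : ℝ)
        ≤ r ^ N * ((α + k) ^ k * (2 ^ k) ^ N) / (N.factorial : ℝ) := by
          gcongr
      _ = (α + k) ^ k * ((2 ^ k * r) ^ N / (N.factorial : ℝ)) := by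
          rw [mul_pow]; ring


lemma lemQ (a : ℕ → ℝ) (C y : ℝ)
    (h : ∀ n, |a n| ≤ C * (y ^ n / (n.factorial : ℝ))) (x : ℝ) :
    Summable (fun n : ℕ => a n * x ^ n) := by
  have hs : Summable (fun n : ℕ => C * ((y * |x|) ^ n / (n.factorial : ℝ))) :=
    (Real.summable_pow_div_factorial (y * |x|)).mul_left C
  apply Summable.of_norm_bounded hs
  intro n
  simp only [Real.norm_eq_abs, abs_mul, abs_pow]
  calc |a n| * |x| ^ n ≤ (C * (y ^ n / (n.factorial : ℝ))) * |x| ^ n :=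
        mul_le_mul_of_nonneg_right (h n) (by positivity)
    _ = C * ((y * |x|) ^ n / (n.factorial : ℝ)) := by rw [mul_pow]; ring

lemma lemP (a : ℕ → ℝ) (C y : ℝ) (hy : 0 < y)
    (h : ∀ n, |a n| ≤ C * (y ^ n / (n.factorial : ℝ))) (t : ℝ) :
    HasDerivAt (fun x : ℝ => ∑' n : ℕ, a n * x ^ n)
      (∑' n : ℕ, ((n : ℝ) + 1) * a (n + 1) * t ^ n) t := by
  have hC : 0 ≤ C := by
    have := (abs_nonneg (a 0)).trans (h 0); simpa using this
  set R : ℝ := |t| + 1 with hR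
  have hR1 : (1:ℝ) ≤ R := by rw [hR]; linarith [abs_nonneg t]
  have hR0 : (0:ℝ) < R := by linarith
  have ht : t ∈ Metric.ball (0:ℝ) R := by
    simp [Metric.mem_ball, Real.dist_eq, hR]
  have hbound : ∀ (n : ℕ) (x : ℝ), x ∈ Metric.ball (0:ℝ) R →
      ‖a n * ((n:ℝ) * x ^ (n - 1))‖ ≤ (C / R) * ((2 * y * R) ^ n / (n.factorial : ℝ)) := by
    intro n x hx
    have hxR : |x| ≤ R := by
      have := Metric.mem_ball.mp hx
      rw [Real.dist_eq, sub_zero] at this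
      exact this.le
    rcases n with _ | m
    · simp; positivity
    · simp only [Real.norm_eq_abs, abs_mul, abs_pow, Nat.add_sub_cancel]
      have e1 : |((m+1 : ℕ) : ℝ)| = (m:ℝ) + 1 := by
        rw [abs_of_nonneg (by positivity)]; push_cast; ring
      rw [e1]
      have step1 : |a (m+1)| * (((m:ℝ) + 1) * |x| ^ m)
          ≤ (C * (y ^ (m+1) / ((m+1).factorial : ℝ))) * (((m:ℝ) + 1) * R ^ m) := by
        apply mul_le_mul (h (m+1)) _ (by positivity) (by positivity)
        apply mul_le_mul_of_nonneg_left _ (by positivity)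
        exact pow_le_pow_left₀ (abs_nonneg x) hxR m
      refine step1.trans ?_
      have e2 : (C / R) * ((2 * y * R) ^ (m+1) / ((m+1).factorial : ℝ))
          = (C * (y ^ (m+1) / ((m+1).factorial : ℝ))) * ((2:ℝ) ^ (m+1) * R ^ m) := by
        rw [mul_pow, mul_pow, pow_succ R m]
        field_simp
      rw [e2]
      apply mul_le_mul_of_nonneg_left _ (by positivity)
      apply mul_le_mul_of_nonneg_right _ (by positivity)
      have : m + 1 < 2 ^ (m+1) := Nat.lt_two_pow_self
      have h2 : ((m:ℝ) + 1) ≤ (2:ℝ) ^ (m+1) := by exact_mod_cast this.le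
      exact h2
  have hu : Summable (fun n : ℕ => (C / R) * ((2 * y * R) ^ n / (n.factorial : ℝ))) :=
    (Real.summable_pow_div_factorial (2 * y * R)).mul_left (C / R)
  have H := hasDerivAt_tsum_of_isPreconnected hu Metric.isOpen_ball
    (convex_ball (0:ℝ) R).isPreconnected
    (fun n x _ => (hasDerivAt_pow n x).const_mul (a n))
    (fun n x hx => hbound n x hx) ht (lemQ a C y h t) ht
  have hsum' : Summable (fun n : ℕ => a n * ((n:ℝ) * t ^ (n - 1))) :=
    Summable.of_norm_bounded hu (fun n => hbound n t ht)
  have e3 : (∑' n : ℕ, a n * ((n:ℝ) * t ^ (n - 1)))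
      = ∑' n : ℕ, ((n : ℝ) + 1) * a (n + 1) * t ^ n := by
    rw [Summable.tsum_eq_zero_add hsum']
    simp only [Nat.cast_zero, zero_mul, mul_zero, zero_add]
    apply tsum_congr
    intro n
    rw [Nat.add_sub_cancel]
    push_cast
    ring
  rw [e3] at H
  exact H


lemma myVand (k : ℕ) : ∀ a b : ℝ, 0 < a → 0 < b →
    ∑ m ∈ Finset.range (k+1), (k.choose m : ℝ) * Real.Gamma (a + m) *
      Real.Gamma (b + ((k - m : ℕ) : ℝ)) =
    Real.Gamma a * Real.Gamma b * Real.Gamma (a + b + k) / Real.Gamma (a + b) := by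
  induction k with
  | zero =>
    intro a b ha hb
    have h : Real.Gamma (a + b) ≠ 0 := (Real.Gamma_pos_of_pos (by linarith)).ne'
    simp [mul_div_assoc, h]
  | succ k ih =>
    intro a b ha hb
    have h0 : ∑ m ∈ Finset.range (k+2), ((k+1).choose m : ℝ) *
        (Real.Gamma (a + m) * Real.Gamma (b + ((k + 1 - m : ℕ) : ℝ))) =
        (∑ m ∈ Finset.range (k+1), (k.choose m : ℝ) *
          (Real.Gamma (a + m) * Real.Gamma (b + ((k + 1 - m : ℕ) : ℝ)))) +
        ∑ m ∈ Finset.range (k+1), (k.choose m : ℝ) *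
          (Real.Gamma (a + (m+1 : ℕ)) * Real.Gamma (b + ((k - m : ℕ) : ℝ))) :=
      Finset.sum_choose_succ_mul
        (fun i j => Real.Gamma (a + i) * Real.Gamma (b + (j : ℝ))) k
    have e1 : ∑ m ∈ Finset.range (k+1), (k.choose m : ℝ) *
        (Real.Gamma (a + m) * Real.Gamma (b + ((k + 1 - m : ℕ) : ℝ))) =
        ∑ m ∈ Finset.range (k+1), (k.choose m : ℝ) *
          Real.Gamma (a + m) * Real.Gamma ((b+1) + ((k - m : ℕ) : ℝ)) := by
      apply Finset.sum_congr rfl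
      intro m hm
      have hm' : m ≤ k := Nat.lt_succ_iff.mp (Finset.mem_range.mp hm)
      have : ((k + 1 - m : ℕ) : ℝ) = ((k - m : ℕ) : ℝ) + 1 := by
        have : k + 1 - m = (k - m) + 1 := by omega
        rw [this]; push_cast; ring
      rw [this]; ring_nf
    have e2 : ∑ m ∈ Finset.range (k+1), (k.choose m : ℝ) *
        (Real.Gamma (a + (m+1 : ℕ)) * Real.Gamma (b + ((k - m : ℕ) : ℝ))) =
        ∑ m ∈ Finset.range (k+1), (k.choose m : ℝ) *
          Real.Gamma ((a+1) + m) * Real.Gamma (b + ((k - m : ℕ) : ℝ)) := by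
      apply Finset.sum_congr rfl
      intro m hm
      have : a + ((m+1 : ℕ) : ℝ) = (a+1) + m := by push_cast; ring
      rw [this]; ring
    have hab : (0:ℝ) < a + b := by linarith
    have I1 := ih a (b+1) ha (by linarith)
    have I2 := ih (a+1) b (by linarith) hb
    have hcalc : ∑ m ∈ Finset.range (k+1+1), ((k+1).choose m : ℝ) *
        Real.Gamma (a + m) * Real.Gamma (b + ((k + 1 - m : ℕ) : ℝ)) =
        Real.Gamma a * Real.Gamma (b+1) * Real.Gamma (a + (b+1) + k) / Real.Gamma (a + (b+1)) +
        Real.Gamma (a+1) * Real.Gamma b * Real.Gamma ((a+1) + b + k) / Real.Gamma ((a+1) + b) := by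
      rw [← I1, ← I2, ← e1, ← e2, ← h0]
      apply Finset.sum_congr rfl
      intro m hm; ring
    rw [hcalc]
    have g1 : Real.Gamma (b+1) = b * Real.Gamma b := Real.Gamma_add_one hb.ne'
    have g2 : Real.Gamma (a+1) = a * Real.Gamma a := Real.Gamma_add_one ha.ne'
    have g3 : Real.Gamma (a + b + 1) = (a+b) * Real.Gamma (a+b) :=
      Real.Gamma_add_one hab.ne'
    have g4 : a + (b+1) = a + b + 1 := by ring
    have g5 : (a+1) + b = a + b + 1 := by ring
    have g6 : a + b + 1 + (k:ℝ) = a + b + ((k:ℝ)+1) := by ring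
    have g8 : a + b + (((k:ℕ)+1 : ℕ) : ℝ) = a + b + ((k:ℝ)+1) := by push_cast; ring
    rw [g4, g5, g6, g8, g3, g1, g2]
    have hΓab : Real.Gamma (a+b) ≠ 0 := (Real.Gamma_pos_of_pos hab).ne'
    field_simp
    ring

lemma Acoef_summable (α r : ℝ) (hα : 0 < α) (hr : 0 < r) (k : ℕ) (x : ℝ) :
    Summable (fun n : ℕ => Acoef α r k n * x ^ n) :=
  lemQ _ _ _ (Acoef_le α r hα hr k) x

lemma termwise (α r t : ℝ) (hα : 0 < α) (hr : 0 < r) (k n : ℕ) :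
    ((n : ℝ) + 1) * Acoef α r k (n + 1) * t ^ n =
      (∑ m ∈ Finset.range (k+1),
        (r * ((k.choose m : ℕ) : ℝ) * (Real.Gamma (α + m) / Real.Gamma α)) *
          (Acoef α r (k - m) n * t ^ n)) +
      (if n = 0 then r * Real.Gamma (α + k) / Real.Gamma α else 0) := by
  have hΓα : Real.Gamma α ≠ 0 := (Real.Gamma_pos_of_pos hα).ne'
  rcases n with _ | m
  · simp only [if_pos rfl, Acoef_zero, mul_zero, zero_mul, Finset.sum_const_zero, zero_add]
    simp only [Nat.cast_zero, zero_add, pow_zero, mul_one, one_mul]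
    rw [Acoef]
    simp [Real.Gamma_zero]
  · -- n = m + 1
    set N : ℕ := m + 1 with hN
    have hb : (0:ℝ) < α * N := by positivity
    have hΓb : Real.Gamma (α * N) ≠ 0 := (Real.Gamma_pos_of_pos hb).ne'
    have hite : (if N = 0 then r * Real.Gamma (α + k) / Real.Gamma α else 0) = 0 := by
      simp [hN]
    rw [hite, add_zero]
    have hsum : ∑ m' ∈ Finset.range (k+1),
        (r * ((k.choose m' : ℕ) : ℝ) * (Real.Gamma (α + m') / Real.Gamma α)) *
          (Acoef α r (k - m') N * t ^ N)
        = (∑ m' ∈ Finset.range (k+1), ((k.choose m' : ℕ) : ℝ) * Real.Gamma (α + m') *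
            Real.Gamma (α * N + ((k - m' : ℕ) : ℝ))) *
          (r ^ (N+1) * t ^ N / (Real.Gamma α * (N.factorial : ℝ) * Real.Gamma (α * N))) := by
      rw [Finset.sum_mul]
      apply Finset.sum_congr rfl
      intro m' _
      rw [Acoef]
      ring
    rw [hsum, myVand k α (α * N) hα hb]
    have hΓab : Real.Gamma (α + α * N) ≠ 0 :=
      (Real.Gamma_pos_of_pos (by positivity)).ne'
    rw [Acoef]
    have c1 : α * ((N + 1 : ℕ) : ℝ) + (k : ℝ) = α + α * N + k := by push_cast; ring
    have c2 : α * ((N + 1 : ℕ) : ℝ) = α + α * N := by push_cast; ring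
    rw [c1, c2]
    have c3 : (((N+1).factorial : ℕ) : ℝ) = ((N:ℝ) + 1) * (N.factorial : ℝ) := by
      rw [Nat.factorial_succ]; push_cast; ring
    rw [c3]
    have hNf : ((N.factorial : ℕ) : ℝ) ≠ 0 := by
      exact_mod_cast N.factorial_ne_zero
    have hN1 : ((N:ℝ) + 1) ≠ 0 := by positivity
    have hΓα' : Real.Gamma α ≠ 0 := hΓα
    have hΓb' : Real.Gamma (N * α) ≠ 0 := by rwa [mul_comm] at hΓb
    field_simp

lemma star (α r t : ℝ) (hα : 0 < α) (hr : 0 < r) (k : ℕ) :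
    ∑' n : ℕ, ((n : ℝ) + 1) * Acoef α r k (n + 1) * t ^ n =
      (∑ m ∈ Finset.range (k+1),
        (r * ((k.choose m : ℕ) : ℝ) * (Real.Gamma (α + m) / Real.Gamma α)) *
          ∑' n : ℕ, Acoef α r (k - m) n * t ^ n) +
      r * Real.Gamma (α + k) / Real.Gamma α := by
  have hsummand : ∀ m' : ℕ, Summable (fun n : ℕ =>
      (r * ((k.choose m' : ℕ) : ℝ) * (Real.Gamma (α + m') / Real.Gamma α)) *
        (Acoef α r (k - m') n * t ^ n)) :=
    fun m' => (Acoef_summable α r hα hr (k - m') t).mul_left _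
  have hite : Summable (fun n : ℕ =>
      if n = 0 then r * Real.Gamma (α + k) / Real.Gamma α else 0) := by
    apply summable_of_ne_finset_zero (s := {0})
    intro b hb
    simp at hb
    simp [hb]
  calc ∑' n : ℕ, ((n : ℝ) + 1) * Acoef α r k (n + 1) * t ^ n
      = ∑' n : ℕ, ((∑ m' ∈ Finset.range (k+1),
          (r * ((k.choose m' : ℕ) : ℝ) * (Real.Gamma (α + m') / Real.Gamma α)) *
            (Acoef α r (k - m') n * t ^ n)) +
          (if n = 0 then r * Real.Gamma (α + k) / Real.Gamma α else 0)) := by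
        exact tsum_congr (fun n => termwise α r t hα hr k n)
    _ = (∑' n : ℕ, ∑ m' ∈ Finset.range (k+1),
          (r * ((k.choose m' : ℕ) : ℝ) * (Real.Gamma (α + m') / Real.Gamma α)) *
            (Acoef α r (k - m') n * t ^ n)) +
        ∑' n : ℕ, (if n = 0 then r * Real.Gamma (α + k) / Real.Gamma α else 0) := by
        exact Summable.tsum_add (summable_sum (fun m' _ => hsummand m')) hite
    _ = (∑ m' ∈ Finset.range (k+1), ∑' n : ℕ,
          (r * ((k.choose m' : ℕ) : ℝ) * (Real.Gamma (α + m') / Real.Gamma α)) *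
            (Acoef α r (k - m') n * t ^ n)) +
        r * Real.Gamma (α + k) / Real.Gamma α := by
        rw [Summable.tsum_finsetSum (fun m' _ => hsummand m'), tsum_ite_eq]
    _ = (∑ m ∈ Finset.range (k+1),
          (r * ((k.choose m : ℕ) : ℝ) * (Real.Gamma (α + m) / Real.Gamma α)) *
            ∑' n : ℕ, Acoef α r (k - m) n * t ^ n) +
        r * Real.Gamma (α + k) / Real.Gamma α := by
        congr 1
        exact Finset.sum_congr rfl (fun m' _ => tsum_mul_left)

lemma exp_tsum (x : ℝ) : Real.exp x = ∑' n : ℕ, x ^ n / (n.factorial : ℝ) := by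
  rw [Real.exp_eq_exp_ℝ, NormedSpace.exp_eq_tsum_div]

lemma S0_eq (α r : ℝ) (hα : 0 < α) (hr : 0 < r) (x : ℝ) :
    Real.exp (r * x) = 1 + ∑' n : ℕ, Acoef α r 0 n * x ^ n := by
  rw [exp_tsum (r * x)]
  rw [Summable.tsum_eq_zero_add (Real.summable_pow_div_factorial (r * x))]
  rw [Summable.tsum_eq_zero_add (Acoef_summable α r hα hr 0 x)]
  rw [Acoef_zero]
  simp only [pow_zero, Nat.factorial_zero, Nat.cast_one, div_one, zero_mul, zero_add]
  congr 1
  apply tsum_congr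
  intro n
  have hb : (0:ℝ) < α * ((n+1 : ℕ) : ℝ) := by positivity
  rw [Acoef]
  have c0 : ((0:ℕ) : ℝ) = 0 := by norm_num
  rw [c0, add_zero]
  rw [mul_pow]
  field_simp [(Real.Gamma_pos_of_pos hb).ne']

end Helpers

/-- difference-differential equations for the pmf of a Poisson
process time-changed by a compound Poisson–Gamma subordinator. -/
theorem stmt1 (lam β α lam1 : ℝ) (hlam : 0 < lam) (hβ : 0 < β) (hα : 0 < α)
    (hlam1 : 0 < lam1) (p : ℕ → ℝ → ℝ)
    (hp0 : ∀ t : ℝ, p 0 t = Real.exp (-(lam * t) * (1 - β ^ α / (lam1 + β) ^ α)))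
    (hpk : ∀ k : ℕ, 1 ≤ k → ∀ t : ℝ,
      p k t = (Real.exp (-(lam * t)) / (Nat.factorial k : ℝ)) *
        (lam1 / (lam1 + β)) ^ k *
        ∑' n : ℕ, (lam * t * β ^ α) ^ (n + 1) *
            Real.Gamma (α * ((n : ℝ) + 1) + (k : ℝ)) /
          ((lam1 + β) ^ (α * ((n : ℝ) + 1)) * (Nat.factorial (n + 1) : ℝ) *
            Real.Gamma (α * ((n : ℝ) + 1)))) :
    ∀ (k : ℕ) (t : ℝ), 0 < t →
      HasDerivAt (p k)
        ((lam * β ^ α / (lam1 + β) ^ α - lam) * p k t +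
          lam * β ^ α / (lam1 + β) ^ α *
            ∑ m ∈ Finset.Icc 1 k, (lam1 / (lam1 + β)) ^ m *
              (Real.Gamma ((m : ℝ) + α) / ((Nat.factorial m : ℝ) * Real.Gamma α)) *
              p (k - m) t) t := by
  intro k t ht
  have hB : 0 < lam1 + β := by linarith
  have hBα : 0 < (lam1 + β) ^ α := Real.rpow_pos_of_pos hB α
  have hβα : 0 < β ^ α := Real.rpow_pos_of_pos hβ α
  have hΓα : Real.Gamma α ≠ 0 := (Real.Gamma_pos_of_pos hα).ne'
  set r : ℝ := lam * β ^ α / (lam1 + β) ^ α with hrdef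
  have hr : 0 < r := by rw [hrdef]; positivity
  set q : ℝ := lam1 / (lam1 + β) with hqdef
  clear_value r q
  have hrepr : ∀ (j : ℕ), 1 ≤ j → ∀ x : ℝ, p j x =
      Real.exp (-(lam * x)) * ((q ^ j / (j.factorial : ℝ)) *
        ∑' n : ℕ, Acoef α r j n * x ^ n) := by
    intro j hj x
    rw [hpk j hj x]
    have h1 : ∀ n : ℕ, (lam * x * β ^ α) ^ (n+1) *
        Real.Gamma (α * ((n:ℝ)+1) + (j:ℝ)) /
        ((lam1+β) ^ (α * ((n:ℝ)+1)) * ((n+1).factorial : ℝ) *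
          Real.Gamma (α * ((n:ℝ)+1)))
        = Acoef α r j (n+1) * x ^ (n+1) := by
      intro n
      have hrp : (lam1+β) ^ (α * ((n:ℝ)+1)) = ((lam1+β) ^ α) ^ (n+1 : ℕ) := by
        rw [← Real.rpow_natCast ((lam1+β) ^ α) (n+1), ← Real.rpow_mul hB.le]
        push_cast
        ring_nf
      rw [hrp, Acoef]
      have c1 : ((n+1 : ℕ) : ℝ) = (n:ℝ)+1 := by push_cast; ring
      rw [c1, hrdef]
      rw [mul_pow, mul_pow, div_pow]
      have hne : ((lam1+β) ^ α) ^ (n+1) ≠ 0 := by positivity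
      have hne2 : ((n+1).factorial : ℝ) ≠ 0 := by
        exact_mod_cast (n+1).factorial_ne_zero
      field_simp
      ring
    rw [tsum_congr h1, Summable.tsum_eq_zero_add (Acoef_summable α r hα hr j x), Acoef_zero]
    simp only [zero_mul, zero_add]
    ring
  obtain _ | K := k
  · -- k = 0
    rw [Finset.Icc_eq_empty (by omega), Finset.sum_empty, mul_zero, add_zero]
    rw [hp0 t]
    rw [show p 0 = fun x => Real.exp (-(lam * x) * (1 - β ^ α / (lam1 + β) ^ α))
      from funext hp0]
    have hd : HasDerivAt (fun x : ℝ => -(lam * x) * (1 - β ^ α / (lam1 + β) ^ α))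
        (-lam * (1 - β ^ α / (lam1 + β) ^ α)) t := by
      simpa using ((hasDerivAt_id t).const_mul lam).neg.mul_const
        (1 - β ^ α / (lam1 + β) ^ α)
    have hde := hd.exp
    convert hde using 1
    rw [hrdef]
    have : (lam1 + β) ^ α ≠ 0 := hBα.ne'
    field_simp
    ring
  · -- k = K + 1
    have hk1 : 1 ≤ K + 1 := by omega
    have hdS : HasDerivAt (fun x : ℝ => ∑' n : ℕ, Acoef α r (K+1) n * x ^ n)
        (∑' n : ℕ, ((n:ℝ)+1) * Acoef α r (K+1) (n+1) * t ^ n) t :=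
      lemP _ _ _ (by positivity) (Acoef_le α r hα hr (K+1)) t
    have hdc := hdS.const_mul (q ^ (K+1) / ((K+1).factorial : ℝ))
    have hdE : HasDerivAt (fun x : ℝ => Real.exp (-(lam * x)))
        (Real.exp (-(lam * t)) * (-lam)) t := by
      have h' : HasDerivAt (fun x : ℝ => -(lam * x)) (-lam) t := by
        exact (((hasDerivAt_id' t).const_mul lam).neg).congr_deriv (by ring)
      exact h'.exp
    have hprod := hdE.mul hdc
    rw [show p (K+1) = fun x => Real.exp (-(lam * x)) *
        ((q ^ (K+1) / ((K+1).factorial : ℝ)) * ∑' n : ℕ, Acoef α r (K+1) n * x ^ n)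
      from funext (hrepr (K+1) hk1)]
    refine hprod.congr_deriv ?_
    beta_reduce
    rw [star α r t hα hr (K+1)]
    have hsplit : (∑ m ∈ Finset.range (K+1+1),
        r * (((K+1).choose m : ℕ) : ℝ) * (Real.Gamma (α + m) / Real.Gamma α) *
          ∑' n : ℕ, Acoef α r (K+1 - m) n * t ^ n)
        = (r * ∑ i ∈ Finset.range K,
            (((K+1).choose (i+1) : ℕ) : ℝ) * (Real.Gamma (α + ((i+1:ℕ):ℝ)) / Real.Gamma α) *
              ∑' n : ℕ, Acoef α r (K - i) n * t ^ n)
          + r * (((K+1).choose (K+1) : ℕ) : ℝ) * (Real.Gamma (α + ((K+1:ℕ):ℝ)) / Real.Gamma α) *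
              (∑' n : ℕ, Acoef α r 0 n * t ^ n)
          + r * ∑' n : ℕ, Acoef α r (K+1) n * t ^ n := by
      rw [Finset.sum_range_succ', Finset.sum_range_succ]
      have e0 : r * (((K+1).choose 0 : ℕ) : ℝ) * (Real.Gamma (α + ((0:ℕ):ℝ)) / Real.Gamma α) *
          ∑' n : ℕ, Acoef α r (K+1 - 0) n * t ^ n = r * ∑' n : ℕ, Acoef α r (K+1) n * t ^ n := by
        simp [hΓα]
      rw [e0]
      congr 1
      congr 1
      · rw [Finset.mul_sum]
        apply Finset.sum_congr rfl
        intro i _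
        rw [show K + 1 - (i+1) = K - i from by omega]
        ring
      · rw [Nat.sub_self]
    have hp0' : p 0 t = Real.exp (-(lam*t)) * (1 + ∑' n : ℕ, Acoef α r 0 n * t ^ n) := by
      rw [hp0 t, show -(lam*t) * (1 - β^α/(lam1+β)^α) = -(lam*t) + r * t from by
        rw [hrdef]; field_simp; ring, Real.exp_add, S0_eq α r hα hr t]
    have hterm : ∀ i ∈ Finset.range K,
        q ^ (1+i) * (Real.Gamma (((1+i:ℕ):ℝ) + α) / (((1+i).factorial : ℝ) * Real.Gamma α)) *
          p (K + 1 - (1+i)) t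
        = Real.exp (-(lam*t)) * ((q ^ (K+1) / (((K+1).factorial : ℕ) : ℝ)) *
            ((((K+1).choose (i+1) : ℕ) : ℝ) * (Real.Gamma (α + ((i+1:ℕ):ℝ)) / Real.Gamma α) *
              ∑' n : ℕ, Acoef α r (K - i) n * t ^ n)) := by
      intro i hi
      have hiK : i < K := Finset.mem_range.mp hi
      rw [show 1 + i = i + 1 from by omega, show K + 1 - (i+1) = K - i from by omega]
      rw [hrepr (K - i) (by omega) t]
      rw [show ((i+1:ℕ):ℝ) + α = α + ((i+1:ℕ):ℝ) from add_comm _ _]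
      have hq1 : q^(i+1) * q^(K-i) = q^(K+1) := by rw [← pow_add]; congr 1; omega
      have hfac : (((K+1).choose (i+1) : ℕ) : ℝ) * ((i+1).factorial : ℝ) *
          ((K-i).factorial : ℝ) = ((K+1).factorial : ℝ) := by
        have h1 : i + 1 ≤ K + 1 := by omega
        have h2 := Nat.choose_mul_factorial_mul_factorial h1
        rw [show K + 1 - (i+1) = K - i from by omega] at h2
        exact_mod_cast h2
      have hf1 : ((i+1).factorial : ℝ) ≠ 0 := by exact_mod_cast (i+1).factorial_ne_zero
      have hf2 : ((K-i).factorial : ℝ) ≠ 0 := by exact_mod_cast (K-i).factorial_ne_zero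
      have hf3 : ((K+1).factorial : ℝ) ≠ 0 := by exact_mod_cast (K+1).factorial_ne_zero
      have hch0 : (((K+1).choose (i+1) : ℕ) : ℝ) ≠ 0 := by
        have : 0 < (K+1).choose (i+1) := Nat.choose_pos (by omega)
        exact_mod_cast this.ne'
      rw [← hq1, ← hfac]
      field_simp
    have hIcc : (∑ m ∈ Finset.Icc 1 (K+1), q ^ m *
          (Real.Gamma ((m:ℝ) + α) / ((m.factorial : ℝ) * Real.Gamma α)) * p (K + 1 - m) t)
        = Real.exp (-(lam*t)) * ((q ^ (K+1) / (((K+1).factorial : ℕ) : ℝ)) *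
            ∑ i ∈ Finset.range K,
              ((((K+1).choose (i+1) : ℕ) : ℝ) * (Real.Gamma (α + ((i+1:ℕ):ℝ)) / Real.Gamma α) *
                ∑' n : ℕ, Acoef α r (K - i) n * t ^ n))
          + q ^ (1+K) * (Real.Gamma (((1+K:ℕ):ℝ) + α) / (((1+K).factorial : ℝ) * Real.Gamma α)) *
              p 0 t := by
      rw [← Finset.Ico_add_one_right_eq_Icc, Finset.sum_Ico_eq_sum_range]
      simp only [Nat.add_sub_cancel]
      rw [Finset.sum_range_succ]
      congr 1
      · rw [Finset.sum_congr rfl hterm, ← Finset.mul_sum, ← Finset.mul_sum]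
      · rw [show K + 1 - (1 + K) = 0 from by omega]
    rw [hsplit, hIcc, hp0']
    have hch : (((K+1).choose (K+1) : ℕ) : ℝ) = 1 := by
      rw [Nat.choose_self]; norm_num
    have hlast : q ^ (1+K) * (Real.Gamma (((1+K:ℕ):ℝ) + α) / (((1+K).factorial : ℝ) * Real.Gamma α)) *
        (Real.exp (-(lam*t)) * (1 + ∑' n : ℕ, Acoef α r 0 n * t ^ n))
        = Real.exp (-(lam*t)) * ((q ^ (K+1) / (((K+1).factorial : ℕ) : ℝ)) *
            ((Real.Gamma (α + ((K+1:ℕ):ℝ)) / Real.Gamma α) *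
              (1 + ∑' n : ℕ, Acoef α r 0 n * t ^ n))) := by
      rw [show 1 + K = K + 1 from by omega]
      rw [show ((K+1:ℕ):ℝ) + α = α + ((K+1:ℕ):ℝ) from add_comm _ _]
      have hf3 : ((K+1).factorial : ℝ) ≠ 0 := by exact_mod_cast (K+1).factorial_ne_zero
      field_simp
    rw [hlast, hch]
    ring
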